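/- A properly vertex-colored digraph (G,σ) is a best match graph (BMG) if and only if the pair (R(G,σ), F(G,σ)) of its informative and forbidden triple sets is consistent and (G,σ) is color-sink-free, i.e., for every vertex x and every color s occurring on the vertices of G with s ≠ σ(x) there exists a vertex y with σ(y) = s and (x,y) ∈ E(G). -/
import Mathlib


/-- A planted phylogenetic rooted tree, encoded by a parent function on a
finite vertex set.  The root `0_T` is a fixed point of `parent`; every vertex
reaches the root by iterating `parent`; the root has exactly one child
(`planted`); and every inner vertex (non-root vertex having a child) has at
least two children (`phylo`). -/
structure PPTree where
  V : Type
  [fintypeV : Fintype V]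
  [decEqV : DecidableEq V]
  root : V
  parent : V → V
  parent_root : parent root = root
  reach : ∀ v : V, ∃ n : ℕ, parent^[n] v = root
  planted : ∃! v : V, v ≠ root ∧ parent v = root
  phylo : ∀ v : V, v ≠ root → (∃ u, parent u = v ∧ u ≠ v) →
      ∃ u w, parent u = v ∧ parent w = v ∧ u ≠ w ∧ u ≠ v ∧ w ≠ v

attribute [instance] PPTree.fintypeV PPTree.decEqV

namespace PPTree

variable (T : PPTree)

/-- `T.le x y` means `x ⪯_T y`, i.e. `y` is an ancestor of `x` (or `x = y`). -/
def le (x y : T.V) : Prop := ∃ n : ℕ, T.parent^[n] x = y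

/-- `T.lt x y` means `x ≺_T y`. -/
def lt (x y : T.V) : Prop := T.le x y ∧ x ≠ y

/-- Leaves are the `⪯_T`-minimal vertices, i.e. vertices without children. -/
def isLeaf (v : T.V) : Prop := ∀ u, T.parent u = v → u = v

/-- Inner vertices: neither leaves nor the planted root. -/
def inner (v : T.V) : Prop := v ≠ T.root ∧ ¬ T.isLeaf v

/-- The last common ancestor of two vertices: the `⪯_T`-minimal common
ancestor. -/
noncomputable def lca (x y : T.V) : T.V :=
  @Classical.epsilon _ ⟨T.root⟩
    fun v => T.le x v ∧ T.le y v ∧ ∀ w, T.le x w → T.le y w → T.le v w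

/-- The last common ancestor of a set of vertices. -/
noncomputable def lcaSet (A : Set T.V) : T.V :=
  @Classical.epsilon _ ⟨T.root⟩
    fun v => (∀ a ∈ A, T.le a v) ∧ ∀ w, (∀ a ∈ A, T.le a w) → T.le v w

/-- `ρ_T`, the unique child of the planted root. -/
noncomputable def rho : T.V := T.planted.choose

theorem rho_ne_root : T.rho ≠ T.root := T.planted.choose_spec.1.1

/-- Edges of `T`, identified with their child endpoint: the vertex `v ≠ 0_T`
represents the edge `(parent v, v)`. -/
abbrev Edge := {v : T.V // v ≠ T.root}

/-- The union `V(T) ∪ E(T)`. -/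
abbrev VE := T.V ⊕ T.Edge

/-- The ancestor order `⪯_T` extended to `V(T) ∪ E(T)`: for an edge `e = uv`
(`u` the parent of `v`), `x ⪯ e` iff `x ⪯ v`, `e ⪯ x` iff `u ⪯ x`, and
`e ⪯ f` iff the child endpoints are comparable accordingly. -/
def leVE : T.VE → T.VE → Prop
  | Sum.inl x, Sum.inl y => T.le x y
  | Sum.inl x, Sum.inr e => T.le x e.1
  | Sum.inr e, Sum.inl y => T.le (T.parent e.1) y
  | Sum.inr e, Sum.inr f => T.le e.1 f.1

def ltVE (a b : T.VE) : Prop := T.leVE a b ∧ a ≠ b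

/-- Two elements of `V(T) ∪ E(T)` are comparable. -/
def cmpVE (a b : T.VE) : Prop := T.leVE a b ∨ T.leVE b a

/-- Membership in `L(T)` for elements of `V(T) ∪ E(T)`. -/
def isLeafVE : T.VE → Prop
  | Sum.inl v => T.isLeaf v
  | Sum.inr _ => False

/-- Map an element of `V(T) ∪ E(T)` to a vertex (an edge `uv` is sent to its
child endpoint `v`). -/
def toVertex : T.VE → T.V
  | Sum.inl v => v
  | Sum.inr e => e.1

end PPTree

/-- Axioms (R0)–(R3) of a reconciliation map `μ : V(T) → V(S) ∪ E(S)`. -/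
structure IsRecon (T S : PPTree) (μ : T.V → S.VE) : Prop where
  R0 : ∀ x, μ x = Sum.inl S.root ↔ x = T.root
  R1 : ∀ x, S.isLeafVE (μ x) ↔ T.isLeaf x
  R2 : ∀ x y, T.lt y x → (∃ u, μ x = Sum.inl u) → (∃ v, μ y = Sum.inl v) → μ x ≠ μ y
  R3 : ∀ x y, T.lt y x → ¬ S.ltVE (μ x) (μ y)

/-- A reconciliation is HGT-free if the images of the endpoints of every edge
of `T` are `⪯_S`-comparable. -/
def IsHGTFree (T S : PPTree) (μ : T.V → S.VE) : Prop :=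
  ∀ v : T.V, v ≠ T.root → S.cmpVE (μ (T.parent v)) (μ v)

/-- `(T,S,μ,σ)` is a σ-reconciliation when `μ` restricted to `L(T)` equals
`σ`. -/
def SigmaCompat (T S : PPTree) (μ : T.V → S.VE) (σ : T.V → S.V) : Prop :=
  ∀ x, T.isLeaf x → μ x = Sum.inl (σ x)

/-- A time map for `T`. -/
def IsTimeMap (T : PPTree) (τ : T.V → ℝ) : Prop :=
  ∀ x y, T.lt x y → τ x < τ y

/-- Axioms (S0)–(S3) of a relaxed scenario `(T,S,μ,τ_T,τ_S)`. -/
structure IsRelaxedScenario (T S : PPTree) (μ : T.V → S.VE)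
    (τT : T.V → ℝ) (τS : S.V → ℝ) : Prop where
  timeT : IsTimeMap T τT
  timeS : IsTimeMap S τS
  S0 : ∀ x, μ x = Sum.inl S.root ↔ x = T.root
  S1 : ∀ x, S.isLeafVE (μ x) ↔ T.isLeaf x
  S2 : ∀ x v, μ x = Sum.inl v → τS v = τT x
  S3 : ∀ x (e : S.Edge), μ x = Sum.inr e → τS e.1 < τT x ∧ τT x < τS (S.parent e.1)

/-- A planted phylogenetic tree whose leaf set is (identified with) the finite
type `L` via the embedding `emb`. -/
structure LeafTree (L : Type) [Fintype L] [DecidableEq L] extends PPTree where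
  emb : L → toPPTree.V
  emb_inj : Function.Injective emb
  emb_leaf : ∀ v : L, toPPTree.isLeaf (emb v)
  emb_surj : ∀ l, toPPTree.isLeaf l → ∃ v : L, emb v = l

/-- The tree `T` displays the rooted triple `ab|c`:
`lca(a,b) ≺ lca(a,c) = lca(b,c)`. -/
def displaysTriple (T : PPTree) (a b c : T.V) : Prop :=
  T.lt (T.lca a b) (T.lca a c) ∧ T.lca a c = T.lca b c

section BMG

variable {V Y : Type} [Fintype V] [DecidableEq V]

/-- `y` is a best match of `x` in the leaf-colored tree `(T,σ)`:
`σ(x) ≠ σ(y)` and `lca(x,y) ⪯ lca(x,y')` for all leaves `y'` of the same color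
as `y`. -/
def LeafTree.bestMatch (T : LeafTree V) (σ : V → Y) (x y : V) : Prop :=
  σ x ≠ σ y ∧ ∀ y' : V, σ y' = σ y →
    T.toPPTree.le (T.toPPTree.lca (T.emb x) (T.emb y))
      (T.toPPTree.lca (T.emb x) (T.emb y'))

/-- `(G,σ)` is the best match graph `𝔅(T,σ)` of the leaf-colored tree
`(T,σ)`. -/
def Explains (T : LeafTree V) (σ : V → Y) (G : V → V → Prop) : Prop :=
  ∀ x y : V, G x y ↔ T.bestMatch σ x y

/-- The triple `ab|b'` is informative for `(G,σ)`. -/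
def Informative (G : V → V → Prop) (σ : V → Y) (a b b' : V) : Prop :=
  a ≠ b ∧ a ≠ b' ∧ b ≠ b' ∧ σ a ≠ σ b ∧ σ b = σ b' ∧ G a b ∧ ¬ G a b'

/-- The triple `ab|b'` is forbidden for `(G,σ)`. -/
def Forbidden (G : V → V → Prop) (σ : V → Y) (a b b' : V) : Prop :=
  a ≠ b ∧ a ≠ b' ∧ b ≠ b' ∧ σ a ≠ σ b ∧ σ b = σ b' ∧ G a b ∧ G a b'

end BMG

namespace PPTree

variable (T : PPTree)

theorem le_refl'' (x : T.V) : T.le x x := ⟨0, rfl⟩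

theorem le_trans'' {x y z : T.V} (h1 : T.le x y) (h2 : T.le y z) : T.le x z := by
  obtain ⟨n, hn⟩ := h1; obtain ⟨m, hm⟩ := h2
  exact ⟨m + n, by rw [Function.iterate_add_apply, hn, hm]⟩

theorem le_root' (x : T.V) : T.le x T.root := T.reach x

theorem le_antisymm'' {x y : T.V} (h1 : T.le x y) (h2 : T.le y x) : x = y := by
  obtain ⟨n, hn⟩ := h1
  obtain ⟨m, hm⟩ := h2
  rcases Nat.eq_zero_or_pos n with h0 | hpos
  · subst h0; exact hn
  have hcyc : T.parent^[m + n] x = x := by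
    rw [Function.iterate_add_apply, hn, hm]
  have hper : ∀ t, T.parent^[(m + n) * t] x = x := by
    intro t
    induction t with
    | zero => simp
    | succ t ih =>
        rw [Nat.mul_succ, Function.iterate_add_apply, hcyc, ih]
  obtain ⟨k, hk⟩ := T.reach x
  have hle : k ≤ (m + n) * k := Nat.le_mul_of_pos_left k (by omega)
  have hx : x = T.root := by
    have h := hper k
    rw [← Nat.sub_add_cancel hle, Function.iterate_add_apply, hk,
        Function.iterate_fixed T.parent_root] at h
    exact h.symm
  rw [hx] at hn ⊢
  rw [Function.iterate_fixed T.parent_root] at hn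
  exact hn

/-- Any two ancestors of a common vertex are comparable. -/
theorem le_comparable {x a b : T.V} (ha : T.le x a) (hb : T.le x b) :
    T.le a b ∨ T.le b a := by
  obtain ⟨n, hn⟩ := ha; obtain ⟨m, hm⟩ := hb
  rcases le_total n m with h | h
  · exact Or.inl ⟨m - n, by
      rw [← hn, ← Function.iterate_add_apply, Nat.sub_add_cancel h]; exact hm⟩
  · exact Or.inr ⟨n - m, by
      rw [← hm, ← Function.iterate_add_apply, Nat.sub_add_cancel h]; exact hn⟩

theorem exists_isLca (x y : T.V) :
    ∃ v, T.le x v ∧ T.le y v ∧ ∀ w, T.le x w → T.le y w → T.le v w := by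
  classical
  have hN : ∃ n, T.le y (T.parent^[n] x) := by
    obtain ⟨k, hk⟩ := T.reach x
    exact ⟨k, hk ▸ T.le_root' y⟩
  refine ⟨T.parent^[Nat.find hN] x, ⟨Nat.find hN, rfl⟩, Nat.find_spec hN, ?_⟩
  rintro w ⟨m, rfl⟩ hyw
  have hnm : Nat.find hN ≤ m := Nat.find_min' hN hyw
  exact ⟨m - Nat.find hN, by
    rw [← Function.iterate_add_apply, Nat.sub_add_cancel hnm]⟩

theorem lca_spec (x y : T.V) :
    T.le x (T.lca x y) ∧ T.le y (T.lca x y) ∧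
      ∀ w, T.le x w → T.le y w → T.le (T.lca x y) w :=
  Classical.epsilon_spec (T.exists_isLca x y)

theorem le_lca_left (x y : T.V) : T.le x (T.lca x y) := (T.lca_spec x y).1

theorem le_lca_right (x y : T.V) : T.le y (T.lca x y) := (T.lca_spec x y).2.1

theorem lca_min {x y : T.V} (w : T.V) (hx : T.le x w) (hy : T.le y w) :
    T.le (T.lca x y) w := (T.lca_spec x y).2.2 w hx hy

/-- If `lca(x,y') ≺ lca(x,y)` then `lca(x,y) = lca(y',y)`. -/
theorem lca_eq_of_lt {x y y' : T.V} (h : T.lt (T.lca x y') (T.lca x y)) :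
    T.lca x y = T.lca y' y := by
  obtain ⟨hle, hne⟩ := h
  have hxc : T.le x (T.lca y' y) := by
    rcases T.le_comparable (T.le_lca_left y' y) (T.le_lca_right x y') with hcd | hdc
    · exfalso
      have hyd : T.le y (T.lca x y') :=
        T.le_trans'' (T.le_lca_right y' y) hcd
      have : T.le (T.lca x y) (T.lca x y') :=
        T.lca_min _ (T.le_lca_left x y') hyd
      exact hne (T.le_antisymm'' hle this)
    · exact T.le_trans'' (T.le_lca_left x y') hdc
  refine T.le_antisymm'' ?_ ?_
  · exact T.lca_min _ hxc (T.le_lca_right y' y)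
  · refine T.lca_min _ ?_ (T.le_lca_right x y)
    exact T.le_trans'' (T.le_lca_right x y') hle

/-- Among a finite nonempty family of ancestors of `x` there is a
`⪯`-minimum. -/
theorem exists_min_anc {ι : Type} [DecidableEq ι] (x : T.V) (s : Finset ι)
    (hs : s.Nonempty) (f : ι → T.V) (hf : ∀ i ∈ s, T.le x (f i)) :
    ∃ i ∈ s, ∀ j ∈ s, T.le (f i) (f j) := by
  classical
  obtain ⟨i, his, hmin⟩ := s.exists_min_image
    (fun i => if h : T.le x (f i) then Nat.find h else 0) hs
  refine ⟨i, his, fun j hjs => ?_⟩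
  have hi := hf i his
  have hj := hf j hjs
  have hij := hmin j hjs
  rw [dif_pos hi, dif_pos hj] at hij
  have hi' := Nat.find_spec hi
  have hj' := Nat.find_spec hj
  refine ⟨Nat.find hj - Nat.find hi, ?_⟩
  have key : T.parent^[Nat.find hj - Nat.find hi] (T.parent^[Nat.find hi] x)
      = T.parent^[Nat.find hj] x := by
    rw [← Function.iterate_add_apply, Nat.sub_add_cancel hij]
  rw [hi', hj'] at key
  exact key

end PPTree

/-- If `¬ (lca(x,y) ⪯ lca(x,z))` then `T` displays `xz|y`. -/
theorem displays_of_not_le (T : PPTree) (x y z : T.V)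
    (h : ¬ T.le (T.lca x y) (T.lca x z)) :
    displaysTriple T x z y := by
  have hcmp := T.le_comparable (T.le_lca_left x y) (T.le_lca_left x z)
  rcases hcmp with hc | hc
  · exact absurd hc h
  · have hne : T.lca x z ≠ T.lca x y := fun e => h (e ▸ T.le_refl'' _)
    exact ⟨⟨hc, hne⟩, T.lca_eq_of_lt ⟨hc, hne⟩⟩


/-- A properly vertex-colored digraph `(G,σ)` is a best match
graph iff the pair `(R(G,σ), F(G,σ))` of informative and forbidden triple sets
is consistent (some tree on the leaf set `V` displays all informative and no
forbidden triples) and `(G,σ)` is color-sink-free. -/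
theorem bmg_characterization
    {V Y : Type} [Fintype V] [DecidableEq V]
    (G : V → V → Prop) (σ : V → Y)
    (hproper : ∀ x y : V, G x y → σ x ≠ σ y) :
    (∃ T : LeafTree V, Explains T σ G) ↔
      ((∃ T : LeafTree V,
          (∀ a b b' : V, Informative G σ a b b' →
              displaysTriple T.toPPTree (T.emb a) (T.emb b) (T.emb b')) ∧
          (∀ a b b' : V, Forbidden G σ a b b' →
              ¬ displaysTriple T.toPPTree (T.emb a) (T.emb b) (T.emb b'))) ∧
       (∀ x : V, ∀ s : Y, (∃ z : V, σ z = s) → s ≠ σ x →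
          ∃ y : V, σ y = s ∧ G x y)) := by
  classical
  constructor
  · rintro ⟨T, hT⟩
    set P := T.toPPTree with hP
    refine ⟨⟨T, ?_, ?_⟩, ?_⟩
    · -- informative triples are displayed
      rintro a b b' ⟨hab, hab', hbb', hσab, hσbb', hGab, hGab'⟩
      have bm := (hT a b).1 hGab
      have hnbm : ¬ T.bestMatch σ a b' := fun bm' => hGab' ((hT a b').2 bm')
      have hσab' : σ a ≠ σ b' := hσbb' ▸ hσab
      have hex : ∃ y', σ y' = σ b' ∧
          ¬ P.le (P.lca (T.emb a) (T.emb b')) (P.lca (T.emb a) (T.emb y')) := by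
        by_contra hc
        push_neg at hc
        exact hnbm ⟨hσab', fun y' hy' => hc y' hy'⟩
      obtain ⟨y', hy'c, hnle⟩ := hex
      have hdisp := displays_of_not_le P (T.emb a) (T.emb b') (T.emb y') hnle
      have h1 : P.le (P.lca (T.emb a) (T.emb b)) (P.lca (T.emb a) (T.emb y')) :=
        bm.2 y' (hy'c.trans hσbb'.symm)
      have h2 : P.le (P.lca (T.emb a) (T.emb b)) (P.lca (T.emb a) (T.emb b')) :=
        P.le_trans'' h1 hdisp.1.1
      have hne : P.lca (T.emb a) (T.emb b) ≠ P.lca (T.emb a) (T.emb b') := by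
        intro e
        exact hnle (e ▸ h1)
      exact ⟨⟨h2, hne⟩, P.lca_eq_of_lt ⟨h2, hne⟩⟩
    · -- forbidden triples are not displayed
      rintro a b b' ⟨hab, hab', hbb', hσab, hσbb', hGab, hGab'⟩
      have bm := (hT a b).1 hGab
      have bm' := (hT a b').1 hGab'
      have h1 : P.le (P.lca (T.emb a) (T.emb b)) (P.lca (T.emb a) (T.emb b')) :=
        bm.2 b' hσbb'.symm
      have h2 : P.le (P.lca (T.emb a) (T.emb b')) (P.lca (T.emb a) (T.emb b)) :=
        bm'.2 b hσbb'
      rintro ⟨⟨_, hne⟩, _⟩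
      exact hne (P.le_antisymm'' h1 h2)
    · -- sink-freeness
      intro x s hs hsx
      obtain ⟨z, hz⟩ := hs
      have hSne : (Finset.univ.filter (fun w : V => σ w = s)).Nonempty :=
        ⟨z, by simp [hz]⟩
      obtain ⟨y, hyS, hymin⟩ := P.exists_min_anc (T.emb x)
        (Finset.univ.filter (fun w : V => σ w = s)) hSne
        (fun w => P.lca (T.emb x) (T.emb w))
        (fun i _ => P.le_lca_left _ _)
      have hys : σ y = s := by simpa using hyS
      refine ⟨y, hys, (hT x y).2 ⟨fun e => hsx (hys ▸ e.symm ▸ rfl), fun y' hy' => ?_⟩⟩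
      exact hymin y' (by simp [hy', hys])
  · rintro ⟨⟨T, hR, hF⟩, hsink⟩
    set P := T.toPPTree with hP
    refine ⟨T, fun x y => ⟨?_, ?_⟩⟩
    · intro hxy
      have hσxy : σ x ≠ σ y := hproper x y hxy
      refine ⟨hσxy, fun y' hy' => ?_⟩
      by_cases hyy' : y' = y
      · subst hyy'; exact P.le_refl'' _
      by_contra hle
      have hdisp := displays_of_not_le P (T.emb x) (T.emb y) (T.emb y') hle
      have hxy'ne : x ≠ y' := fun h => hσxy (by rw [h, hy'])
      have hxyne : x ≠ y := fun h => hσxy (by rw [h])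
      have hσxy' : σ x ≠ σ y' := fun h => hσxy (h.trans hy')
      by_cases hG' : G x y'
      · exact hF x y' y ⟨hxy'ne, hxyne, hyy', hσxy', hy', hG', hxy⟩ hdisp
      · have hinf : Informative G σ x y y' :=
          ⟨hxyne, hxy'ne, Ne.symm hyy', hσxy, hy'.symm, hxy, hG'⟩
        exact hle (hR x y y' hinf).1.1
    · rintro ⟨hσxy, hbm⟩
      by_contra hxy
      obtain ⟨y', hy's, hGxy'⟩ := hsink x (σ y) ⟨y, rfl⟩ (Ne.symm hσxy)
      by_cases hyy' : y' = y
      · exact hxy (hyy' ▸ hGxy')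
      have hxy'ne : x ≠ y' := fun h => hσxy (h ▸ hy's ▸ rfl)
      have hxyne : x ≠ y := fun h => hσxy (by rw [h])
      have hσxy' : σ x ≠ σ y' := fun h => hσxy (h.trans hy's)
      have hinf : Informative G σ x y' y :=
        ⟨hxy'ne, hxyne, hyy', hσxy', hy's, hGxy', hxy⟩
      have hdisp := hR x y' y hinf
      have h2 := hbm y' hy's
      exact hdisp.1.2 (P.le_antisymm'' hdisp.1.1 h2)
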